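/- Let Y be noncentral chi-squared with k degrees of freedom and noncentrality η ≥ 0. Then for 0 ≤ c < 1: P(Y ≤ (1−c)k) ≤ exp(−ηc/(2+2c) − c²k/4). -/

import Mathlib

open MeasureTheory ProbabilityTheory Real
open scoped NNReal ENNReal

lemma gauss_exp_sq (m lam : ℝ) (hlam : 0 ≤ lam) :
    ∫ x, Real.exp (-lam * x ^ 2) ∂(gaussianReal m 1) =
      Real.exp (-(lam * m ^ 2) / (1 + 2 * lam)) / Real.sqrt (1 + 2 * lam) := by
  have hden : (0:ℝ) < 1 + 2 * lam := by linarith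
  rw [gaussianReal_of_var_ne_zero m one_ne_zero]
  have hpdf : (gaussianPDF m 1) =
      fun x => (((gaussianPDFReal m 1 x).toNNReal : ℝ≥0) : ℝ≥0∞) := by
    ext x; simp [gaussianPDF, ENNReal.ofReal]
  rw [hpdf, integral_withDensity_eq_integral_smul
    ((measurable_gaussianPDFReal m 1).real_toNNReal)]
  have hint : ∀ x : ℝ, ((gaussianPDFReal m 1 x).toNNReal : ℝ≥0) • Real.exp (-lam * x ^ 2)
      = ((Real.sqrt (2 * π))⁻¹ * Real.exp (-(lam * m ^ 2) / (1 + 2 * lam)))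
        * Real.exp (-((1 + 2 * lam) / 2) * (x - m / (1 + 2 * lam)) ^ 2) := by
    intro x
    have hnn := gaussianPDFReal_nonneg m 1 x
    rw [NNReal.smul_def, smul_eq_mul, Real.coe_toNNReal _ hnn, gaussianPDFReal]
    have h1 : ((1 : ℝ≥0) : ℝ) = 1 := rfl
    rw [h1, mul_one, mul_one, mul_assoc, mul_assoc, ← Real.exp_add, ← Real.exp_add]
    congr 1
    rw [Real.exp_eq_exp]
    field_simp
    ring
  simp_rw [hint]
  rw [integral_const_mul]
  have hshift : (∫ x : ℝ, Real.exp (-((1 + 2 * lam) / 2) * (x - m / (1 + 2 * lam)) ^ 2))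
      = Real.sqrt (π / ((1 + 2 * lam) / 2)) := by
    rw [integral_sub_right_eq_self (fun y => Real.exp (-((1 + 2 * lam) / 2) * y ^ 2))
      (m / (1 + 2 * lam))]
    exact integral_gaussian _
  rw [hshift]
  have hsq : Real.sqrt (π / ((1 + 2 * lam) / 2))
      = Real.sqrt (2 * π) / Real.sqrt (1 + 2 * lam) := by
    rw [show π / ((1 + 2 * lam) / 2) = (2 * π) / (1 + 2 * lam) by field_simp,
      Real.sqrt_div (by positivity)]
  rw [hsq]
  have h2π : Real.sqrt (2 * π) ≠ 0 := by positivity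
  field_simp

lemma exp_le_one_add_of_mem (c : ℝ) (hc0 : 0 ≤ c) (hc1 : c ≤ 1) :
    Real.exp (c - c ^ 2 / 2) ≤ 1 + c := by
  set f : ℝ → ℝ := fun x => 1 + x - Real.exp (x - x ^ 2 / 2) with hf
  have hd : ∀ x : ℝ, HasDerivAt f (1 - Real.exp (x - x ^ 2 / 2) * (1 - x)) x := by
    intro x
    have h1 : HasDerivAt (fun x : ℝ => x - x ^ 2 / 2) (1 - x) x := by
      have := (hasDerivAt_id x).sub ((hasDerivAt_pow 2 x).div_const 2)
      simp at this; exact this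
    have h2 := h1.exp
    have h3 := ((hasDerivAt_id x).const_add (1:ℝ)).sub h2
    simp at h3; exact h3
  have hmono : MonotoneOn f (Set.Icc 0 1) := by
    apply monotoneOn_of_deriv_nonneg (convex_Icc 0 1)
    · exact Continuous.continuousOn (by continuity)
    · intro x hx
      exact (hd x).differentiableAt.differentiableWithinAt
    · intro x hx
      rw [interior_Icc] at hx
      rw [(hd x).deriv]
      have hx0 := hx.1
      have hx1 := hx.2
      have hle : Real.exp (x - x ^ 2 / 2) ≤ (1 - x)⁻¹ := by
        have h1 : Real.exp (x - x ^ 2 / 2) ≤ Real.exp x := by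
          apply Real.exp_le_exp.2; nlinarith
        have h2 : 1 - x ≤ Real.exp (-x) := by
          have := Real.add_one_le_exp (-x); linarith
        have h3 : Real.exp x ≤ (1 - x)⁻¹ := by
          rw [← one_div, le_div_iff₀ (by linarith)]
          calc rexp x * (1 - x) ≤ rexp x * rexp (-x) := by
                apply mul_le_mul_of_nonneg_left h2 (Real.exp_nonneg x)
            _ = 1 := by rw [← Real.exp_add]; simp
        linarith
      have : Real.exp (x - x ^ 2 / 2) * (1 - x) ≤ 1 := by
        calc Real.exp (x - x ^ 2 / 2) * (1 - x) ≤ (1 - x)⁻¹ * (1 - x) := by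
              apply mul_le_mul_of_nonneg_right hle (by linarith)
          _ = 1 := inv_mul_cancel₀ (by linarith)
      linarith
  have h0 : f 0 ≤ f c := hmono (Set.mem_Icc.2 ⟨le_refl 0, zero_le_one⟩)
    (Set.mem_Icc.2 ⟨hc0, hc1⟩) hc0
  have hf0 : f 0 = 0 := by simp [hf]
  simp only [hf] at h0 hf0
  linarith

set_option maxHeartbeats 1000000

/-- lower tail of a noncentral chi-squared variable:
P(Y ≤ (1−c)k) ≤ exp(−ηc/(2+2c) − c²k/4) for 0 ≤ c < 1. -/
theorem stmt_12 {Ω : Type*} [MeasurableSpace Ω] (μ : Measure Ω) [IsProbabilityMeasure μ]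
    (k : ℕ) (G : Fin k → Ω → ℝ) (means : Fin k → ℝ) (η : ℝ)
    (hmeas : ∀ i, Measurable (G i))
    (hindep : iIndepFun G μ)
    (hlaw : ∀ i, Measure.map (G i) μ = gaussianReal (means i) 1)
    (hη : η = ∑ i, (means i) ^ 2)
    (c : ℝ) (hc0 : 0 ≤ c) (hc1 : c < 1) :
    (μ {ω | ∑ i, (G i ω) ^ 2 ≤ (1 - c) * k}).toReal
      ≤ Real.exp (-(η * c) / (2 + 2 * c) - c ^ 2 * k / 4) := by
  have ht0 : -(c / 2) ≤ 0 := by linarith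
  have hden : (0:ℝ) < 1 + 2 * (c / 2) := by linarith
  -- per-coordinate mgf
  have hmgf_i : ∀ i : Fin k, mgf (fun ω => (G i ω) ^ 2) μ (-(c / 2))
      = Real.exp (-(c / 2 * (means i) ^ 2) / (1 + 2 * (c / 2)))
        / Real.sqrt (1 + 2 * (c / 2)) := by
    intro i
    have h1 : (∫ x, Real.exp (-(c / 2) * x ^ 2) ∂(Measure.map (G i) μ))
        = ∫ ω, Real.exp (-(c / 2) * (G i ω) ^ 2) ∂μ :=
      integral_map (hmeas i).aemeasurable
        (Real.continuous_exp.comp (continuous_const.mul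
          (continuous_pow 2))).aestronglyMeasurable
    have h2 : mgf (fun ω => (G i ω) ^ 2) μ (-(c / 2))
        = ∫ ω, Real.exp (-(c / 2) * (G i ω) ^ 2) ∂μ := rfl
    rw [h2, ← h1, hlaw i]
    exact gauss_exp_sq (means i) (c / 2) (by linarith)
  -- independence of squares
  have hXindep : iIndepFun (fun i ω => (G i ω) ^ 2) μ :=
    hindep.comp (fun _ x => x ^ 2) (fun _ => measurable_id.pow_const 2)
  -- integrability of exp (t * sum)
  have hint : Integrable (fun ω => Real.exp (-(c / 2) * ∑ i, (G i ω) ^ 2)) μ := by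
    refine Integrable.mono' (integrable_const 1) ?_ (ae_of_all _ fun ω => ?_)
    · exact (Real.measurable_exp.comp ((Finset.measurable_sum Finset.univ
        fun i _ => (hmeas i).pow_const 2).const_mul (-(c / 2)))).aestronglyMeasurable
    · rw [Real.norm_eq_abs, abs_of_nonneg (Real.exp_nonneg _)]
      have h0 : -(c / 2) * ∑ i, (G i ω) ^ 2 ≤ 0 :=
        mul_nonpos_of_nonpos_of_nonneg ht0 (Finset.sum_nonneg fun i _ => sq_nonneg _)
      calc Real.exp (-(c / 2) * ∑ i, (G i ω) ^ 2) ≤ Real.exp 0 := Real.exp_le_exp.2 h0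
        _ = 1 := Real.exp_zero
  -- Chernoff bound
  have hcher := measure_le_le_exp_mul_mgf (μ := μ) (X := fun ω => ∑ i, (G i ω) ^ 2)
    ((1 - c) * k) ht0 hint
  refine le_trans hcher ?_
  -- mgf of the sum
  have hsum : (fun ω => ∑ i, (G i ω) ^ 2) = ∑ i, (fun ω => (G i ω) ^ 2) := by
    ext ω; simp
  have hmgf : mgf (fun ω => ∑ i, (G i ω) ^ 2) μ (-(c / 2))
      = ∏ i, mgf (fun ω => (G i ω) ^ 2) μ (-(c / 2)) := by
    rw [hsum]
    exact hXindep.mgf_sum (fun i => (hmeas i).pow_const 2) Finset.univ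
  rw [hmgf]
  have hprod : (∏ i, mgf (fun ω => (G i ω) ^ 2) μ (-(c / 2)))
      = Real.exp (-(c / 2 * η) / (1 + 2 * (c / 2))) / (Real.sqrt (1 + 2 * (c / 2))) ^ k := by
    simp_rw [hmgf_i]
    rw [Finset.prod_div_distrib, ← Real.exp_sum, Finset.prod_const, Finset.card_univ,
      Fintype.card_fin, hη, ← Finset.sum_div]
    congr 3
    rw [Finset.mul_sum, Finset.sum_neg_distrib]
  rw [hprod]
  -- lower bound the sqrt power
  have hexp_le : Real.exp ((c - c ^ 2 / 2) / 2) ≤ Real.sqrt (1 + 2 * (c / 2)) := by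
    have h1 : Real.exp (c - c ^ 2 / 2) ≤ 1 + c := exp_le_one_add_of_mem c hc0 hc1.le
    have h2 := Real.sqrt_le_sqrt h1
    rw [← Real.exp_half] at h2
    convert h2 using 2
    ring
  have hpow : Real.exp (((c - c ^ 2 / 2) / 2) * k) ≤ (Real.sqrt (1 + 2 * (c / 2))) ^ k := by
    rw [mul_comm, Real.exp_nat_mul]
    exact pow_le_pow_left₀ (Real.exp_nonneg _) hexp_le k
  have hkey : Real.exp (-(η * c) / (2 + 2 * c) - c ^ 2 * k / 4)
      = Real.exp (-(-(c / 2)) * ((1 - c) * k)) *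
        (Real.exp (-(c / 2 * η) / (1 + 2 * (c / 2)))
          / Real.exp (((c - c ^ 2 / 2) / 2) * k)) := by
    rw [← Real.exp_sub, ← Real.exp_add]
    congr 1
    have hc2 : (2:ℝ) + 2 * c ≠ 0 := by linarith
    field_simp
    ring
  rw [hkey]
  exact mul_le_mul_of_nonneg_left
    (div_le_div_of_nonneg_left (Real.exp_nonneg _) (Real.exp_pos _) hpow)
    (Real.exp_nonneg _)
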